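/- Let β₀,β₁,β₂,β₁₁,β₁₂,β₂₂ ∈ ℝ, f(y,ẏ) = exp(β₀ + β₁y + β₂ẏ + (β₁₁/2)y² + β₁₂yẏ + (β₂₂/2)ẏ²), and m₁ := (2π)^{−1/2} ∫_ℝ |u| log|u| exp(−u²/2) du. Then (2π)⁻¹ ∬_{ℝ²} |v| · log|v·f(u,v)| · exp(−(u²+v²)/2) du dv = m₁ + (β₀ + β₁₁/2 + β₂₂)·√(2/π). Equivalently, for independent standard normals U₁, U₂, E[|U₂| log|U₂ f(U₁,U₂)|] = m₁ + (β₀ + β₁₁/2 + β₂₂)√(2/π), which is the moment identity q₀·E'[|Ż_t| log|Ż_t|] = m₁ + (β₀ + β₁₁/2 + β₂₂)√(2/π) in the quadratic exponential model. -/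

import Mathlib

open MeasureTheory Real Set

-- integrability helpers
lemma int_E : Integrable (fun x : ℝ => Real.exp (-(1/2) * x ^ 2)) :=
  integrable_exp_neg_mul_sq (by norm_num)

lemma int_pow (n : ℕ) : Integrable (fun x : ℝ => x ^ n * Real.exp (-(1/2) * x ^ 2)) := by
  have h := integrable_rpow_mul_exp_neg_mul_sq (b := 1/2) (by norm_num) (s := (n : ℝ))
    ((by norm_num : (-1:ℝ) < 0).trans_le (Nat.cast_nonneg n))
  simpa [Real.rpow_natCast] using h

lemma int_dom {g : ℝ → ℝ} (hg : AEStronglyMeasurable g)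
    (hb : ∀ x, |g x| ≤ 1 + x ^ 4) :
    Integrable (fun x : ℝ => g x * Real.exp (-(1/2) * x ^ 2)) := by
  have hmaj : Integrable (fun x : ℝ => (1 + x ^ 4) * Real.exp (-(1/2) * x ^ 2)) := by
    have := int_E.add (int_pow 4)
    simpa [add_mul, one_mul, Pi.add_def] using this
  refine hmaj.mono' (hg.mul int_E.aestronglyMeasurable) ?_
  filter_upwards with x
  rw [Real.norm_eq_abs, abs_mul, abs_of_nonneg (Real.exp_pos _).le]
  exact mul_le_mul_of_nonneg_right (hb x) (Real.exp_pos _).le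

lemma bnd_abs (x : ℝ) : |(|x|)| ≤ 1 + x ^ 4 := by
  rw [abs_abs]
  rcases le_total |x| 1 with h | h
  · nlinarith [pow_le_one₀ (abs_nonneg x) h (n := 4), abs_nonneg x, sq_abs x,
      sq_nonneg (x^2)]
  · have h4 : |x| ^ 4 = x ^ 4 := by rw [← abs_pow, abs_of_nonneg (by positivity)]
    nlinarith [le_self_pow₀ h (by norm_num : (4:ℕ) ≠ 0), h4]

lemma bnd_mul_abs (x : ℝ) : abs (x * |x|) ≤ 1 + x ^ 4 := by
  have : abs (x * |x|) = x ^ 2 := by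
    rw [abs_mul, abs_abs, ← sq_abs]; ring
  rw [this]; nlinarith [sq_nonneg (x ^ 2 - 1)]

lemma bnd_sq_abs (x : ℝ) : abs (x ^ 2 * |x|) ≤ 1 + x ^ 4 := by
  have h : abs (x ^ 2 * |x|) = |x| ^ 3 := by
    rw [abs_mul, abs_abs, ← sq_abs, abs_of_nonneg (by positivity : (0:ℝ) ≤ |x|^2)]; ring
  rw [h]
  rcases le_total |x| 1 with h1 | h1
  · nlinarith [pow_le_one₀ (abs_nonneg x) h1 (n := 3), sq_nonneg (x^2)]
  · have h4 : |x| ^ 4 = x ^ 4 := by rw [← abs_pow, abs_of_nonneg (by positivity)]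
    nlinarith [pow_le_pow_right₀ h1 (by norm_num : 3 ≤ 4)]

lemma bnd_log (x : ℝ) : |(|x| * Real.log |x|)| ≤ 1 + x ^ 4 := by
  set t := |x| with ht
  have ht0 : 0 ≤ t := abs_nonneg x
  rcases eq_or_lt_of_le ht0 with h0 | h0
  · simp [← h0]
    positivity
  rcases le_total t 1 with h1 | h1
  · have hlog : Real.log t ≤ 0 := Real.log_nonpos ht0 h1
    have : |t * Real.log t| = t * (-Real.log t) := by
      rw [abs_mul, abs_of_nonneg ht0, abs_of_nonpos hlog]
    rw [this]
    have hinv : Real.log t⁻¹ ≤ t⁻¹ - 1 := Real.log_le_sub_one_of_pos (by positivity)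
    rw [Real.log_inv] at hinv
    have : t * (-Real.log t) ≤ t * (t⁻¹ - 1) :=
      mul_le_mul_of_nonneg_left hinv ht0
    have htinv : t * (t⁻¹ - 1) = 1 - t := by
      field_simp
    nlinarith [sq_nonneg (x ^ 2)]
  · have hlog : 0 ≤ Real.log t := Real.log_nonneg h1
    have : |t * Real.log t| = t * Real.log t := by
      rw [abs_mul, abs_of_nonneg ht0, abs_of_nonneg hlog]
    rw [this]
    have h2 : Real.log t ≤ t - 1 := Real.log_le_sub_one_of_pos (by linarith)
    have h4 : t ^ 4 = x ^ 4 := by rw [ht, ← abs_pow, abs_of_nonneg (by positivity)]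
    nlinarith [mul_le_mul_of_nonneg_left h2 ht0, pow_le_pow_right₀ h1 (by norm_num : 2 ≤ 4)]

lemma odd_integral {g : ℝ → ℝ} (h : ∀ x, g (-x) = - g x) : ∫ x : ℝ, g x = 0 := by
  have h1 : ∫ x : ℝ, g (-x) = ∫ x : ℝ, g x := integral_neg_eq_self g volume
  simp_rw [h, integral_neg] at h1
  linarith

-- Gaussian values
lemma val_I0 : ∫ x : ℝ, Real.exp (-(1/2) * x ^ 2) = Real.sqrt (2 * π) := by
  rw [integral_gaussian, show π / (1/2 : ℝ) = 2 * π by ring]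

lemma rpow_to_pow (x : ℝ) (n : ℕ) : x ^ (n : ℝ) = x ^ n := Real.rpow_natCast x n

lemma val_ioi1 : ∫ x in Ioi (0:ℝ), x * Real.exp (-(1/2) * x ^ 2) = 1 := by
  have h := integral_rpow_mul_exp_neg_mul_rpow (p := 2) (q := 1) (b := 1/2)
    (by norm_num) (by norm_num) (by norm_num)
  rw [show ((1:ℝ)) = ((1:ℕ):ℝ) by norm_num] at h
  simp_rw [Real.rpow_natCast, show ((2:ℝ)) = ((2:ℕ):ℝ) by norm_num, Real.rpow_natCast] at h
  norm_num [Real.Gamma_one, Real.rpow_neg_one] at h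
  simp_rw [neg_mul]
  convert h using 3

lemma val_ioi2 : ∫ x in Ioi (0:ℝ), x ^ 2 * Real.exp (-(1/2) * x ^ 2) = Real.sqrt (2 * π) / 2 := by
  have h := integral_rpow_mul_exp_neg_mul_rpow (p := 2) (q := 2) (b := 1/2)
    (by norm_num) (by norm_num) (by norm_num)
  simp_rw [show ((2:ℝ)) = ((2:ℕ):ℝ) by norm_num, Real.rpow_natCast] at h
  norm_num at h
  simp_rw [neg_mul]
  rw [show (fun x : ℝ => x ^ 2 * Real.exp (-(1/2 * x ^ 2))) = fun x : ℝ => x ^ 2 * Real.exp (-(1 / 2 * x ^ 2)) by norm_num] at *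
  rw [h]
  have hG : Real.Gamma (3/2) = Real.sqrt π / 2 := by
    rw [show (3/2 : ℝ) = 1/2 + 1 by norm_num, Real.Gamma_add_one (by norm_num),
      Real.Gamma_one_half_eq]
    ring
  have hr : ((1:ℝ)/2) ^ (-(3:ℝ)/2) = 2 * Real.sqrt 2 := by
    rw [one_div, show (-(3:ℝ)/2) = -(3/2 : ℝ) by ring, Real.inv_rpow (by norm_num),
      ← Real.rpow_neg (by norm_num), neg_neg]
    rw [show (3/2 : ℝ) = 1 + 1/2 by norm_num, Real.rpow_add (by norm_num), Real.rpow_one,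
      ← Real.sqrt_eq_rpow]
  rw [show (-(3:ℝ)/2) = -((3:ℝ)/2) by ring] at hr
  rw [hr, hG, Real.sqrt_mul (by norm_num : (0:ℝ) ≤ 2)]
  ring

lemma val_ioi3 : ∫ x in Ioi (0:ℝ), x ^ 3 * Real.exp (-(1/2) * x ^ 2) = 2 := by
  have h := integral_rpow_mul_exp_neg_mul_rpow (p := 2) (q := 3) (b := 1/2)
    (by norm_num) (by norm_num) (by norm_num)
  rw [show ((3:ℝ)) = ((3:ℕ):ℝ) by norm_num] at h
  simp_rw [Real.rpow_natCast, show ((2:ℝ)) = ((2:ℕ):ℝ) by norm_num, Real.rpow_natCast] at h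
  norm_num at h
  have hG : Real.Gamma (2) = 1 := by
    rw [show (2 : ℝ) = 1 + 1 by norm_num, Real.Gamma_add_one (by norm_num), Real.Gamma_one]
    ring
  norm_num [hG] at h
  simp_rw [neg_mul]
  convert h using 3

lemma val_J0 : ∫ x : ℝ, |x| * Real.exp (-(1/2) * x ^ 2) = 2 := by
  have : (fun x : ℝ => |x| * Real.exp (-(1/2) * x ^ 2))
      = fun x : ℝ => (fun t : ℝ => t * Real.exp (-(1/2) * t ^ 2)) |x| := by
    funext x; simp [sq_abs]
  rw [this, integral_comp_abs (f := fun t : ℝ => t * Real.exp (-(1/2) * t ^ 2)), val_ioi1]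
  norm_num

lemma val_I2 : ∫ x : ℝ, x ^ 2 * Real.exp (-(1/2) * x ^ 2) = Real.sqrt (2 * π) := by
  have : (fun x : ℝ => x ^ 2 * Real.exp (-(1/2) * x ^ 2))
      = fun x : ℝ => (fun t : ℝ => t ^ 2 * Real.exp (-(1/2) * t ^ 2)) |x| := by
    funext x; simp [sq_abs]
  rw [this, integral_comp_abs (f := fun t : ℝ => t ^ 2 * Real.exp (-(1/2) * t ^ 2)), val_ioi2]
  ring

lemma val_K3 : ∫ x : ℝ, x ^ 2 * |x| * Real.exp (-(1/2) * x ^ 2) = 4 := by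
  have : (fun x : ℝ => x ^ 2 * |x| * Real.exp (-(1/2) * x ^ 2))
      = fun x : ℝ => (fun t : ℝ => t ^ 3 * Real.exp (-(1/2) * t ^ 2)) |x| := by
    funext x
    simp only [sq_abs]
    rw [show |x| ^ 3 = |x| ^ 2 * |x| by ring, sq_abs]
  rw [this, integral_comp_abs (f := fun t : ℝ => t ^ 3 * Real.exp (-(1/2) * t ^ 2)), val_ioi3]
  norm_num

/-- In the quadratic exponential model, with
`m₁ = (2π)^{−1/2} ∫ |u| log|u| exp(−u²/2) du`,
`(2π)⁻¹ ∬ |v|·log|v·f(u,v)|·exp(−(u²+v²)/2) du dv = m₁ + (β₀ + β₁₁/2 + β₂₂)√(2/π)`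
(the moment identity `q₀·E'[|Ż_t| log|Ż_t|] = m₁ + (β₀ + β₁₁/2 + β₂₂)√(2/π)`). -/
theorem stmt10 (β₀ β₁ β₂ β₁₁ β₁₂ β₂₂ : ℝ)
    (f : ℝ → ℝ → ℝ)
    (hf : ∀ y ydot : ℝ, f y ydot =
      Real.exp (β₀ + β₁ * y + β₂ * ydot + β₁₁ / 2 * y ^ 2 + β₁₂ * y * ydot + β₂₂ / 2 * ydot ^ 2))
    (m₁ : ℝ)
    (hm₁ : m₁ = (Real.sqrt (2 * π))⁻¹ * ∫ u : ℝ, |u| * Real.log |u| * Real.exp (-u ^ 2 / 2)) :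
    (2 * π)⁻¹ * ∫ p : ℝ × ℝ,
        |p.2| * Real.log |p.2 * f p.1 p.2| * Real.exp (-(p.1 ^ 2 + p.2 ^ 2) / 2)
      = m₁ + (β₀ + β₁₁ / 2 + β₂₂) * Real.sqrt (2 / π) := by
  have hpi := Real.pi_pos
  set s := Real.sqrt (2 * π) with hs_def
  have hs0 : 0 < s := Real.sqrt_pos.2 (by positivity)
  have hs2 : s ^ 2 = 2 * π := Real.sq_sqrt (by positivity)
  -- 1D integrability
  have iE := int_E
  have iP1 : Integrable (fun x : ℝ => x * Real.exp (-(1/2) * x ^ 2)) := by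
    simpa using int_pow 1
  have iP2 := int_pow 2
  have iA : Integrable (fun x : ℝ => |x| * Real.exp (-(1/2) * x ^ 2)) :=
    int_dom measurable_abs.aestronglyMeasurable bnd_abs
  have iL : Integrable (fun x : ℝ => |x| * Real.log |x| * Real.exp (-(1/2) * x ^ 2)) :=
    int_dom ((measurable_abs.mul
      (Real.measurable_log.comp measurable_abs)).aestronglyMeasurable) bnd_log
  have iM : Integrable (fun x : ℝ => x * |x| * Real.exp (-(1/2) * x ^ 2)) :=
    int_dom (measurable_id.mul measurable_abs).aestronglyMeasurable bnd_mul_abs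
  have iS : Integrable (fun x : ℝ => x ^ 2 * |x| * Real.exp (-(1/2) * x ^ 2)) :=
    int_dom ((measurable_id.pow_const 2).mul measurable_abs).aestronglyMeasurable bnd_sq_abs
  -- 1D values
  have vP1 : ∫ x : ℝ, x * Real.exp (-(1/2) * x ^ 2) = 0 := by
    apply odd_integral; intro x; rw [neg_sq]; ring
  have vM : ∫ x : ℝ, x * |x| * Real.exp (-(1/2) * x ^ 2) = 0 := by
    apply odd_integral; intro x; rw [neg_sq, abs_neg]; ring
  have vL : ∫ x : ℝ, |x| * Real.log |x| * Real.exp (-(1/2) * x ^ 2) = s * m₁ := by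
    have hcong : ∫ u : ℝ, |u| * Real.log |u| * Real.exp (-u ^ 2 / 2)
        = ∫ x : ℝ, |x| * Real.log |x| * Real.exp (-(1/2) * x ^ 2) := by
      congr 1; funext u; rw [show -u ^ 2 / 2 = -(1/2) * u ^ 2 by ring]
    rw [hm₁, hcong, ← mul_assoc, mul_inv_cancel₀ hs0.ne', one_mul]
  -- pointwise identity
  have key : ∀ u v : ℝ, |v| * Real.log |v * f u v| * Real.exp (-(u ^ 2 + v ^ 2) / 2)
      = Real.exp (-(1/2) * u ^ 2) * (|v| * Real.log |v| * Real.exp (-(1/2) * v ^ 2))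
      + Real.exp (-(1/2) * u ^ 2) * (β₀ * (|v| * Real.exp (-(1/2) * v ^ 2)))
      + (u * Real.exp (-(1/2) * u ^ 2)) * (β₁ * (|v| * Real.exp (-(1/2) * v ^ 2)))
      + Real.exp (-(1/2) * u ^ 2) * (β₂ * (v * |v| * Real.exp (-(1/2) * v ^ 2)))
      + (u ^ 2 * Real.exp (-(1/2) * u ^ 2)) * ((β₁₁/2) * (|v| * Real.exp (-(1/2) * v ^ 2)))
      + (u * Real.exp (-(1/2) * u ^ 2)) * (β₁₂ * (v * |v| * Real.exp (-(1/2) * v ^ 2)))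
      + Real.exp (-(1/2) * u ^ 2) * ((β₂₂/2) * (v ^ 2 * |v| * Real.exp (-(1/2) * v ^ 2))) := by
    intro u v
    have hexp : Real.exp (-(u ^ 2 + v ^ 2) / 2)
        = Real.exp (-(1/2) * u ^ 2) * Real.exp (-(1/2) * v ^ 2) := by
      rw [← Real.exp_add]; congr 1; ring
    rcases eq_or_ne v 0 with rfl | hv
    · simp
    · rw [hf, hexp, abs_mul, abs_of_pos (Real.exp_pos _),
        Real.log_mul (abs_ne_zero.2 hv) (Real.exp_ne_zero _), Real.log_exp]
      ring
  -- the double integral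
  have hI : (∫ p : ℝ × ℝ,
        |p.2| * Real.log |p.2 * f p.1 p.2| * Real.exp (-(p.1 ^ 2 + p.2 ^ 2) / 2))
      = s * (s * m₁) + s * (β₀ * 2) + 0 * (β₁ * 2) + s * (β₂ * 0)
        + s * (β₁₁ / 2 * 2) + 0 * (β₁₂ * 0) + s * (β₂₂ / 2 * 4) := by
    rw [integral_congr_ae (Filter.Eventually.of_forall fun p : ℝ × ℝ => key p.1 p.2)]
    rw [MeasureTheory.Measure.volume_eq_prod]
    have i₁ := iE.mul_prod iL
    have i₂ := iE.mul_prod (iA.const_mul β₀)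
    have i₃ := iP1.mul_prod (iA.const_mul β₁)
    have i₄ := iE.mul_prod (iM.const_mul β₂)
    have i₅ := iP2.mul_prod (iA.const_mul (β₁₁/2))
    have i₆ := iP1.mul_prod (iM.const_mul β₁₂)
    have i₇ := iE.mul_prod (iS.const_mul (β₂₂/2))
    have c2 : Integrable (fun z : ℝ × ℝ => Real.exp (-(1/2) * z.1 ^ 2) * (|z.2| * Real.log |z.2| * Real.exp (-(1/2) * z.2 ^ 2)) + Real.exp (-(1/2) * z.1 ^ 2) * (β₀ * (|z.2| * Real.exp (-(1/2) * z.2 ^ 2)))) (volume.prod volume) := i₁.add i₂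
    have c3 : Integrable (fun z : ℝ × ℝ => Real.exp (-(1/2) * z.1 ^ 2) * (|z.2| * Real.log |z.2| * Real.exp (-(1/2) * z.2 ^ 2)) + Real.exp (-(1/2) * z.1 ^ 2) * (β₀ * (|z.2| * Real.exp (-(1/2) * z.2 ^ 2))) + z.1 * Real.exp (-(1/2) * z.1 ^ 2) * (β₁ * (|z.2| * Real.exp (-(1/2) * z.2 ^ 2)))) (volume.prod volume) := c2.add i₃
    have c4 : Integrable (fun z : ℝ × ℝ => Real.exp (-(1/2) * z.1 ^ 2) * (|z.2| * Real.log |z.2| * Real.exp (-(1/2) * z.2 ^ 2)) + Real.exp (-(1/2) * z.1 ^ 2) * (β₀ * (|z.2| * Real.exp (-(1/2) * z.2 ^ 2))) + z.1 * Real.exp (-(1/2) * z.1 ^ 2) * (β₁ * (|z.2| * Real.exp (-(1/2) * z.2 ^ 2))) + Real.exp (-(1/2) * z.1 ^ 2) * (β₂ * (z.2 * |z.2| * Real.exp (-(1/2) * z.2 ^ 2)))) (volume.prod volume) := c3.add i₄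
    have c5 : Integrable (fun z : ℝ × ℝ => Real.exp (-(1/2) * z.1 ^ 2) * (|z.2| * Real.log |z.2| * Real.exp (-(1/2) * z.2 ^ 2)) + Real.exp (-(1/2) * z.1 ^ 2) * (β₀ * (|z.2| * Real.exp (-(1/2) * z.2 ^ 2))) + z.1 * Real.exp (-(1/2) * z.1 ^ 2) * (β₁ * (|z.2| * Real.exp (-(1/2) * z.2 ^ 2))) + Real.exp (-(1/2) * z.1 ^ 2) * (β₂ * (z.2 * |z.2| * Real.exp (-(1/2) * z.2 ^ 2))) + z.1 ^ 2 * Real.exp (-(1/2) * z.1 ^ 2) * (β₁₁ / 2 * (|z.2| * Real.exp (-(1/2) * z.2 ^ 2)))) (volume.prod volume) := c4.add i₅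
    have c6 : Integrable (fun z : ℝ × ℝ => Real.exp (-(1/2) * z.1 ^ 2) * (|z.2| * Real.log |z.2| * Real.exp (-(1/2) * z.2 ^ 2)) + Real.exp (-(1/2) * z.1 ^ 2) * (β₀ * (|z.2| * Real.exp (-(1/2) * z.2 ^ 2))) + z.1 * Real.exp (-(1/2) * z.1 ^ 2) * (β₁ * (|z.2| * Real.exp (-(1/2) * z.2 ^ 2))) + Real.exp (-(1/2) * z.1 ^ 2) * (β₂ * (z.2 * |z.2| * Real.exp (-(1/2) * z.2 ^ 2))) + z.1 ^ 2 * Real.exp (-(1/2) * z.1 ^ 2) * (β₁₁ / 2 * (|z.2| * Real.exp (-(1/2) * z.2 ^ 2))) + z.1 * Real.exp (-(1/2) * z.1 ^ 2) * (β₁₂ * (z.2 * |z.2| * Real.exp (-(1/2) * z.2 ^ 2)))) (volume.prod volume) := c5.add i₆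
    rw [integral_add c6 i₇,
      integral_add c5 i₆,
      integral_add c4 i₅,
      integral_add c3 i₄,
      integral_add c2 i₃,
      integral_add i₁ i₂,
      integral_prod_mul (fun u : ℝ => Real.exp (-(1/2) * u ^ 2)) (fun v : ℝ => |v| * Real.log |v| * Real.exp (-(1/2) * v ^ 2)),
      integral_prod_mul (fun u : ℝ => Real.exp (-(1/2) * u ^ 2)) (fun v : ℝ => β₀ * (|v| * Real.exp (-(1/2) * v ^ 2))),
      integral_prod_mul (fun u : ℝ => u * Real.exp (-(1/2) * u ^ 2)) (fun v : ℝ => β₁ * (|v| * Real.exp (-(1/2) * v ^ 2))),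
      integral_prod_mul (fun u : ℝ => Real.exp (-(1/2) * u ^ 2)) (fun v : ℝ => β₂ * (v * |v| * Real.exp (-(1/2) * v ^ 2))),
      integral_prod_mul (fun u : ℝ => u ^ 2 * Real.exp (-(1/2) * u ^ 2)) (fun v : ℝ => β₁₁ / 2 * (|v| * Real.exp (-(1/2) * v ^ 2))),
      integral_prod_mul (fun u : ℝ => u * Real.exp (-(1/2) * u ^ 2)) (fun v : ℝ => β₁₂ * (v * |v| * Real.exp (-(1/2) * v ^ 2))),
      integral_prod_mul (fun u : ℝ => Real.exp (-(1/2) * u ^ 2)) (fun v : ℝ => β₂₂ / 2 * (v ^ 2 * |v| * Real.exp (-(1/2) * v ^ 2))),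
      integral_const_mul, integral_const_mul, integral_const_mul, integral_const_mul,
      integral_const_mul, integral_const_mul,
      vL, vP1, vM, val_I0, val_I2, val_J0, val_K3]
  rw [hI]
  have hsqrt : Real.sqrt (2 / π) = 2 / s := by
    rw [show (2:ℝ) / π = 4 / (2 * π) by
        rw [div_eq_div_iff (by positivity) (by positivity)]; ring,
      Real.sqrt_div (by norm_num : (0:ℝ) ≤ 4), hs_def,
      show (4:ℝ) = 2 ^ 2 by norm_num, Real.sqrt_sq (by norm_num : (0:ℝ) ≤ 2)]
  rw [hsqrt, ← hs2]
  field_simp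
  ring
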